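/- Asymptotic small-gain lemma: Let z : ℝ≥0 → ℝ≥0 be bounded, let β : ℝ≥0 → ℝ≥0 satisfy β(t) → 0 as t → ∞, let ρ₂ be of class K∞, and let c ≥ 0. Suppose that for all t, τ ≥ 0, z(t + τ) ≤ β(t) + (Id + ρ₂)⁻¹( sup_{s ≥ t/4 + τ} z(s) ) + c. Then limsup_{t → ∞} z(t) ≤ (Id + ρ₂⁻¹)(c) = c + ρ₂⁻¹(c). -/

import Mathlib

open scoped NNReal

/-- A function `γ : ℝ≥0 → ℝ≥0` is of class K if it is continuous, strictly
increasing, and `γ 0 = 0`. -/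
def ClassK (γ : ℝ≥0 → ℝ≥0) : Prop := Continuous γ ∧ StrictMono γ ∧ γ 0 = 0

/-- A function `ρ : ℝ≥0 → ℝ≥0` is of class K∞ if it is of class K and unbounded. -/
def ClassKInf (ρ : ℝ≥0 → ℝ≥0) : Prop :=
  ClassK ρ ∧ Filter.Tendsto ρ Filter.atTop Filter.atTop

/-- Asymptotic small-gain lemma: if `z` is bounded, `β(t) → 0`, `ρ₂` is of
class K∞ with inverse `ρ₂inv`, `σ₂` is the inverse bijection of `Id + ρ₂`, and
`z(t+τ) ≤ β(t) + (Id+ρ₂)⁻¹(sup_{s ≥ t/4+τ} z(s)) + c` for all `t, τ ≥ 0`, then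
`limsup_{t→∞} z(t) ≤ c + ρ₂⁻¹(c)`. -/
theorem asymptotic_small_gain
    (z β : ℝ≥0 → ℝ≥0) (ρ₂ ρ₂inv σ₂ : ℝ≥0 → ℝ≥0) (c : ℝ≥0)
    (hz : BddAbove (Set.range z))
    (hβ : Filter.Tendsto β Filter.atTop (nhds 0))
    (hρ₂ : ClassKInf ρ₂)
    (hρ₂invl : Function.LeftInverse ρ₂inv ρ₂)
    (hρ₂invr : Function.RightInverse ρ₂inv ρ₂)
    (hσ₂l : Function.LeftInverse σ₂ (fun s => s + ρ₂ s))
    (hσ₂r : Function.RightInverse σ₂ (fun s => s + ρ₂ s))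
    (hineq : ∀ t τ : ℝ≥0,
      z (t + τ) ≤ β t + σ₂ (sSup (z '' Set.Ici (t / 4 + τ))) + c) :
    Filter.limsup z Filter.atTop ≤ c + ρ₂inv c := by
  obtain ⟨⟨hρcont, hρmono, hρ0⟩, hρtop⟩ := hρ₂
  set f : ℝ≥0 → ℝ≥0 := fun s => s + ρ₂ s with hf
  have hfmono : StrictMono f := fun a b hab => add_lt_add hab (hρmono hab)
  have hfsurj : Function.Surjective f := hσ₂r.surjective
  -- σ₂ is the inverse of the order isomorphism f
  have hiso : ∀ x, σ₂ x = (hfmono.orderIsoOfSurjective f hfsurj).symm x := by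
    intro x
    apply hfmono.injective
    have h1 : f (σ₂ x) = x := hσ₂r x
    have h2 : f ((hfmono.orderIsoOfSurjective f hfsurj).symm x) = x :=
      (hfmono.orderIsoOfSurjective f hfsurj).apply_symm_apply x
    rw [h1, h2]
  have hσcont : Continuous σ₂ := by
    have := (hfmono.orderIsoOfSurjective f hfsurj).symm.continuous
    simpa [funext hiso] using this
  have hσmono : Monotone σ₂ := fun a b hab => by
    rw [hiso a, hiso b]
    exact ((hfmono.orderIsoOfSurjective f hfsurj).symm.le_iff_le).mpr hab
  have hρinvmono : Monotone ρ₂inv := fun a b hab => by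
    by_contra h
    push_neg at h
    have := hρmono h
    rw [hρ₂invr a, hρ₂invr b] at this
    exact absurd hab (not_le.mpr this)
  set L := Filter.limsup z Filter.atTop with hL
  obtain ⟨B, hB⟩ := hz
  have hBz : ∀ s, z s ≤ B := fun s => hB (Set.mem_range_self s)
  have hcobdd : ∀ g : ℝ≥0 → ℝ≥0,
      Filter.IsCoboundedUnder (· ≤ ·) Filter.atTop g := fun g =>
    Filter.isCoboundedUnder_le_of_le Filter.atTop (fun x => (zero_le : 0 ≤ g x))
  -- Step A+B: for all ε > 0, L ≤ σ₂ (L + ε) + c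
  have key : ∀ ε : ℝ≥0, 0 < ε → L ≤ σ₂ (L + ε) + c := by
    intro ε hε
    -- find u with sup of tail ≤ L + ε
    have hne : {a : ℝ≥0 | ∀ᶠ s in Filter.atTop, z s ≤ a}.Nonempty :=
      ⟨B, Filter.Eventually.of_forall hBz⟩
    have hLlt : L < L + ε := lt_add_of_pos_right L hε
    have hLdef : L = sInf {a : ℝ≥0 | ∀ᶠ s in Filter.atTop, z s ≤ a} := rfl
    rw [hLdef] at hLlt
    obtain ⟨a, ha, halt⟩ := exists_lt_of_csInf_lt hne hLlt
    obtain ⟨u, hu⟩ := Filter.eventually_atTop.mp ha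
    -- for all t, eventually z s ≤ β t + σ₂ (L + ε) + c
    have hev : ∀ t : ℝ≥0, L ≤ β t + σ₂ (L + ε) + c := by
      intro t
      refine Filter.limsup_le_of_le (hcobdd z) ?_
      rw [Filter.eventually_atTop]
      refine ⟨t + u, fun s hs => ?_⟩
      have hst : t ≤ s := le_trans (le_add_right le_rfl) hs
      have hsτ : s = t + (s - t) := (add_tsub_cancel_of_le hst).symm
      have hτu : u ≤ s - t := le_tsub_of_add_le_left hs
      calc z s = z (t + (s - t)) := by rw [← hsτ]
        _ ≤ β t + σ₂ (sSup (z '' Set.Ici (t / 4 + (s - t)))) + c := hineq t (s - t)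
        _ ≤ β t + σ₂ (L + ε) + c := by
            gcongr
            apply hσmono
            refine le_trans (csSup_le ?_ ?_) halt.le
            · exact (Set.nonempty_Ici).image z
            · rintro x ⟨w, hw, rfl⟩
              exact hu w (le_trans hτu (le_trans (le_add_left le_rfl) hw))
    -- let t → ∞
    have htend : Filter.Tendsto (fun t => β t + σ₂ (L + ε) + c)
        Filter.atTop (nhds (0 + σ₂ (L + ε) + c)) := by
      exact Filter.Tendsto.add (Filter.Tendsto.add hβ tendsto_const_nhds) tendsto_const_nhds
    have := ge_of_tendsto htend (Filter.Eventually.of_forall hev)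
    simpa using this
  -- let ε → 0 using continuity of σ₂
  have hLσ : L ≤ σ₂ L + c := by
    have htend : Filter.Tendsto (fun ε : ℝ≥0 => σ₂ (L + ε) + c)
        (nhdsWithin 0 (Set.Ioi 0)) (nhds (σ₂ (L + 0) + c)) := by
      refine Filter.Tendsto.add ?_ tendsto_const_nhds
      exact (hσcont.tendsto _).comp
        ((tendsto_const_nhds.add Filter.tendsto_id).mono_left nhdsWithin_le_nhds)
    rw [add_zero] at htend
    refine ge_of_tendsto htend ?_
    filter_upwards [self_mem_nhdsWithin] with ε hε
    exact key ε hε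
  -- unwind
  set y := σ₂ L with hy
  have hfy : y + ρ₂ y = L := hσ₂r L
  have hρyc : ρ₂ y ≤ c := by
    have : y + ρ₂ y ≤ y + c := by rw [hfy]; exact hLσ
    exact le_of_add_le_add_left this
  have hyc : y ≤ ρ₂inv c := by
    have := hρinvmono hρyc
    rwa [hρ₂invl y] at this
  calc L = y + ρ₂ y := hfy.symm
    _ ≤ ρ₂inv c + c := add_le_add hyc hρyc
    _ = c + ρ₂inv c := add_comm _ _
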